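/- Let k ≥ 1, let n_1,…,n_k ≥ 1 and m_1,…,m_k ≥ 1 be integers, and let ε ∈ {1,−1}. Then the group G(n,m,ε) is not isomorphic to the infinite cyclic group ℤ. -/

import Mathlib

/-- The relators of the group `G(n,m,ε) = ⟨b_1,…,b_k, t | b_i^{n_i} = b_{i+1}^{m_{i+1}}
(1 ≤ i ≤ k−1), t⁻¹ b_k^{n_k} t = b_1^{ε m_1}⟩`, where the generator `some i` is `b_{i+1}`
and `none` is `t`. -/
def cycleRels (k : ℕ) (hk : 0 < k) (n m : Fin k → ℤ) (ε : ℤ) :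
    Set (FreeGroup (Option (Fin k))) :=
  {x | ∃ i j : Fin k, (i : ℕ) + 1 = (j : ℕ) ∧
      x = FreeGroup.of (some i) ^ n i * (FreeGroup.of (some j) ^ m j)⁻¹} ∪
  {(FreeGroup.of none)⁻¹ *
      FreeGroup.of (some ⟨k - 1, Nat.sub_lt hk Nat.one_pos⟩) ^
        n ⟨k - 1, Nat.sub_lt hk Nat.one_pos⟩ *
      FreeGroup.of none *
      (FreeGroup.of (some ⟨0, hk⟩) ^ (ε * m ⟨0, hk⟩))⁻¹}

namespace CycleAux

/-- rescaling automorphisms of `Multiplicative ℚ`. -/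
noncomputable def scaleHom : ℚˣ →* MulAut (Multiplicative ℚ) where
  toFun u := AddEquiv.toMultiplicative (AddAut.mulLeft u)
  map_one' := by
    ext x
    simp [AddEquiv.toMultiplicative, AddAut.mulLeft, Units.smul_def]
  map_mul' u v := by
    ext x
    simp [AddEquiv.toMultiplicative, AddAut.mulLeft, Units.smul_def, mul_assoc]

theorem scaleHom_apply (u : ℚˣ) (x : ℚ) :
    scaleHom u (Multiplicative.ofAdd x) = Multiplicative.ofAdd ((u : ℚ) * x) := by
  simp [scaleHom, AddEquiv.toMultiplicative, AddAut.mulLeft, Units.smul_def]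

variable {k : ℕ}

/-- The rational weights assigned to the generators `b_i`. -/
noncomputable def cQ (n m : Fin k → ℤ) (i : Fin k) : ℚ :=
  (∏ j ∈ Finset.univ.filter (fun j => j < i), (n j : ℚ)) *
    ∏ j ∈ Finset.univ.filter (fun j => i < j), (m j : ℚ)

theorem cQ_pos (n m : Fin k → ℤ) (hn : ∀ i, 1 ≤ n i) (hm : ∀ i, 1 ≤ m i) (i : Fin k) :
    0 < cQ n m i := by
  apply mul_pos <;>
    exact Finset.prod_pos fun j _ => by
      exact_mod_cast lt_of_lt_of_le zero_lt_one (by first | exact hn j | exact hm j)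

theorem cQ_step (n m : Fin k → ℤ) (i j : Fin k) (hij : (i : ℕ) + 1 = (j : ℕ)) :
    (n i : ℚ) * cQ n m i = (m j : ℚ) * cQ n m j := by
  unfold cQ
  have e1 : Finset.univ.filter (fun x => x < j) =
      insert i (Finset.univ.filter (fun x => x < i)) := by
    ext x; simp only [Finset.mem_filter, Finset.mem_univ, true_and, Finset.mem_insert,
      Fin.lt_def, Fin.ext_iff]; omega
  have e2 : Finset.univ.filter (fun x => i < x) =
      insert j (Finset.univ.filter (fun x => j < x)) := by
    ext x; simp only [Finset.mem_filter, Finset.mem_univ, true_and, Finset.mem_insert,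
      Fin.lt_def, Fin.ext_iff]; omega
  rw [e1, e2, Finset.prod_insert (by simp), Finset.prod_insert (by simp)]
  ring

theorem cQ_first (n m : Fin k → ℤ) (hk : 0 < k) :
    (m ⟨0, hk⟩ : ℚ) * cQ n m ⟨0, hk⟩ = ∏ j, (m j : ℚ) := by
  unfold cQ
  have h1 : Finset.univ.filter (fun x => x < (⟨0, hk⟩ : Fin k)) = ∅ := by
    ext x; simp [Fin.lt_def]
  have h2 : (Finset.univ : Finset (Fin k)) =
      insert ⟨0, hk⟩ (Finset.univ.filter (fun x => (⟨0, hk⟩ : Fin k) < x)) := by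
    ext x; simp only [Finset.mem_univ, Finset.mem_insert, Finset.mem_filter, true_and, true_iff,
      Fin.lt_def, Fin.ext_iff]; omega
  conv_rhs => rw [h2]
  rw [h1, Finset.prod_insert (by simp), Finset.prod_empty]
  ring

theorem cQ_last (n m : Fin k → ℤ) (hk : 0 < k) :
    (n ⟨k - 1, Nat.sub_lt hk Nat.one_pos⟩ : ℚ) * cQ n m ⟨k - 1, Nat.sub_lt hk Nat.one_pos⟩ =
      ∏ j, (n j : ℚ) := by
  unfold cQ
  set l : Fin k := ⟨k - 1, Nat.sub_lt hk Nat.one_pos⟩ with hl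
  have h1 : Finset.univ.filter (fun x => l < x) = ∅ := by
    ext x
    simp only [Finset.mem_filter, Finset.mem_univ, true_and, Finset.notMem_empty, iff_false,
      not_lt, Fin.le_def, hl]
    exact Nat.le_sub_one_of_lt x.isLt
  have h2 : (Finset.univ : Finset (Fin k)) =
      insert l (Finset.univ.filter (fun x => x < l)) := by
    ext x
    simp only [Finset.mem_univ, Finset.mem_insert, Finset.mem_filter, true_and, true_iff,
      Fin.lt_def, Fin.ext_iff, hl]
    have := x.isLt
    omega
  conv_rhs => rw [h2]
  rw [h1, Finset.prod_insert (by simp), Finset.prod_empty]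
  ring

theorem inl_ofAdd_zpow (c : ℚ) (zz : ℤ) :
    (SemidirectProduct.inl (φ := scaleHom) (Multiplicative.ofAdd c)) ^ zz =
      SemidirectProduct.inl (Multiplicative.ofAdd ((zz : ℚ) * c)) := by
  rw [← map_zpow]
  congr 1

theorem relsHom (hk : 0 < k) (n m : Fin k → ℤ) (ε : ℤ)
    {G : Type*} [Group G] (T : G) (B : Fin k → G)
    (h1 : ∀ i j : Fin k, (i : ℕ) + 1 = (j : ℕ) → B i ^ n i = B j ^ m j)
    (h2 : T⁻¹ * B ⟨k - 1, Nat.sub_lt hk Nat.one_pos⟩ ^ n ⟨k - 1, Nat.sub_lt hk Nat.one_pos⟩ * T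
      = B ⟨0, hk⟩ ^ (ε * m ⟨0, hk⟩)) :
    ∀ r ∈ cycleRels k hk n m ε,
      FreeGroup.lift (fun o => Option.elim o T B) r = 1 := by
  rintro r (⟨i, j, hij, rfl⟩ | rfl)
  · simp only [map_mul, map_inv, map_zpow, FreeGroup.lift_apply_of, Option.elim]
    rw [h1 i j hij, mul_inv_cancel]
  · simp only [map_mul, map_inv, map_zpow, FreeGroup.lift_apply_of, Option.elim]
    rw [← h2]
    group

end CycleAux

open CycleAux in
theorem stmt1 (k : ℕ) (hk : 0 < k) (n m : Fin k → ℤ)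
    (hn : ∀ i, 1 ≤ n i) (hm : ∀ i, 1 ≤ m i) (ε : ℤ) (hε : ε = 1 ∨ ε = -1) :
    ¬ Nonempty (PresentedGroup (cycleRels k hk n m ε) ≃* Multiplicative ℤ) := by
  rintro ⟨e⟩
  set l : Fin k := ⟨k - 1, Nat.sub_lt hk Nat.one_pos⟩ with hldef
  set z : Fin k := ⟨0, hk⟩ with hzdef
  set N : ℚ := ∏ j, (n j : ℚ) with hNdef
  set M : ℚ := ∏ j, (m j : ℚ) with hMdef
  have hN : 0 < N := Finset.prod_pos fun j _ => by
    exact_mod_cast lt_of_lt_of_le zero_lt_one (hn j)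
  have hM : 0 < M := Finset.prod_pos fun j _ => by
    exact_mod_cast lt_of_lt_of_le zero_lt_one (hm j)
  have hεQ : ((ε : ℚ) = 1 ∨ (ε : ℚ) = -1) := by
    rcases hε with h | h <;> [left; right] <;> rw [h] <;> norm_num
  have hεne : (ε : ℚ) ≠ 0 := by rcases hεQ with h | h <;> rw [h] <;> norm_num
  have hc0 : 0 < cQ n m z := cQ_pos n m hn hm z
  set b : PresentedGroup (cycleRels k hk n m ε) := PresentedGroup.of (some z) with hbdef
  set t : PresentedGroup (cycleRels k hk n m ε) := PresentedGroup.of none with htdef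
  by_cases hcase : N = (ε : ℚ) * M
  · -- the "abelianized" case: use two homomorphisms to `Multiplicative ℚ`
    have hχ := relsHom hk n m ε (G := Multiplicative ℚ)
      (Multiplicative.ofAdd (1 : ℚ)) (fun _ => 1)
      (fun i j _ => by simp) (by simp)
    have hρ := relsHom hk n m ε (G := Multiplicative ℚ) 1
      (fun i => Multiplicative.ofAdd (cQ n m i))
      (fun i j hij => by
        rw [← ofAdd_zsmul, ← ofAdd_zsmul, zsmul_eq_mul, zsmul_eq_mul, cQ_step n m i j hij])
      (by
        rw [← ofAdd_zsmul, ← ofAdd_zsmul, zsmul_eq_mul, zsmul_eq_mul]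
        rw [inv_one, one_mul, mul_one]
        congr 1
        push_cast
        rw [cQ_last n m hk, ← hNdef, hcase, mul_assoc, cQ_first n m hk, ← hMdef])
    set χ := PresentedGroup.toGroup hχ with hχdef
    set ρ := PresentedGroup.toGroup hρ with hρdef
    set g : PresentedGroup (cycleRels k hk n m ε) := e.symm (Multiplicative.ofAdd 1) with hgdef
    have hgen : ∀ x : PresentedGroup (cycleRels k hk n m ε),
        x = g ^ (Multiplicative.toAdd (e x)) := by
      intro x
      apply e.injective
      rw [map_zpow, hgdef, MulEquiv.apply_symm_apply, ← ofAdd_zsmul, smul_eq_mul, mul_one]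
      simp
    have hteq := hgen t
    have hbeq := hgen b
    have hχt : χ t = Multiplicative.ofAdd (1 : ℚ) := PresentedGroup.toGroup.of hχ
    have hχb : χ b = 1 := PresentedGroup.toGroup.of hχ
    have hρb : ρ b = Multiplicative.ofAdd (cQ n m z) := PresentedGroup.toGroup.of hρ
    set a : ℤ := Multiplicative.toAdd (e t)
    set c : ℤ := Multiplicative.toAdd (e b)
    set x : ℚ := Multiplicative.toAdd (χ g) with hxdef
    have h1 : (a : ℚ) * x = 1 := by
      have h : χ g ^ a = Multiplicative.ofAdd (1 : ℚ) := by rw [← map_zpow, ← hteq, hχt]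
      have h' := congrArg Multiplicative.toAdd h
      simpa [smul_eq_mul, hxdef] using h'
    have h2 : (c : ℚ) * x = 0 := by
      have h : χ g ^ c = (1 : Multiplicative ℚ) := by rw [← map_zpow, ← hbeq, hχb]
      have h' := congrArg Multiplicative.toAdd h
      simpa [smul_eq_mul, hxdef] using h' 
    have hxne : x ≠ 0 := by
      intro h; rw [h, mul_zero] at h1; exact one_ne_zero h1.symm
    have hc : c = 0 := by
      have : (c : ℚ) = 0 := by
        rcases mul_eq_zero.mp h2 with h | h
        · exact h
        · exact absurd h hxne
      exact_mod_cast this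
    have hb1 : b = 1 := by rw [hbeq, hc, zpow_zero]
    rw [hb1, map_one] at hρb
    have : cQ n m z = 0 := by
      have := congrArg Multiplicative.toAdd hρb
      simpa using this.symm
    exact absurd this (ne_of_gt hc0)
  · -- the non-abelian case: map to the affine group `Multiplicative ℚ ⋊ ℚˣ`
    have hu0 : N / ((ε : ℚ) * M) ≠ 0 := by
      apply div_ne_zero (ne_of_gt hN)
      exact mul_ne_zero hεne (ne_of_gt hM)
    set u : ℚˣ := Units.mk0 _ hu0 with hudef
    have hφ := relsHom hk n m ε (G := Multiplicative ℚ ⋊[scaleHom] ℚˣ)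
      (SemidirectProduct.inr u)
      (fun i => SemidirectProduct.inl (Multiplicative.ofAdd (cQ n m i)))
      (fun i j hij => by
        rw [inl_ofAdd_zpow, inl_ofAdd_zpow, cQ_step n m i j hij])
      (by
        rw [inl_ofAdd_zpow, inl_ofAdd_zpow]
        rw [← map_inv, ← SemidirectProduct.inl_aut_inv, ← map_inv, scaleHom_apply]
        congr 1
        push_cast
        rw [cQ_last n m hk, ← hNdef, mul_assoc, cQ_first n m hk, ← hMdef]
        rw [hudef]
        simp only [Units.val_inv_eq_inv_val, Units.val_mk0]
        field_simp)
    set φ := PresentedGroup.toGroup hφ with hφdef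
    have hφt : φ t = SemidirectProduct.inr u := PresentedGroup.toGroup.of hφ
    have hφb : φ b = SemidirectProduct.inl (Multiplicative.ofAdd (cQ n m z)) :=
      PresentedGroup.toGroup.of hφ
    have hcomm : t * b = b * t := by
      apply e.injective
      rw [map_mul, map_mul, mul_comm]
    have := congrArg φ hcomm
    rw [map_mul, map_mul, hφt, hφb] at this
    have hleft := congrArg SemidirectProduct.left this
    simp only [SemidirectProduct.mul_left, SemidirectProduct.left_inr,
      SemidirectProduct.left_inl, SemidirectProduct.right_inr, SemidirectProduct.right_inl,
      map_one, MulAut.one_apply, one_mul, mul_one] at hleft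
    rw [scaleHom_apply] at hleft
    have : (u : ℚ) * cQ n m z = cQ n m z := by
      have := congrArg Multiplicative.toAdd hleft
      simpa using this
    have hu1 : (u : ℚ) = 1 :=
      mul_right_cancel₀ (ne_of_gt hc0) (by rw [one_mul]; exact this)
    rw [hudef, Units.val_mk0, div_eq_one_iff_eq (mul_ne_zero hεne (ne_of_gt hM))] at hu1
    exact hcase hu1
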